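/- For every even natural number k ≥ 4, the infimum of the set { r^k·(r-1)/(r^(k-1)·(r-1) - r) : r is real, r > 1 and r^(k-1)·(r-1) - r > 0 } is greater than or equal to the infimum of the set { r^k/(r^(k-1) - r) : r is real, r > 1 and r^(k-1) - r > 0 }. -/
import Mathlib

theorem stmt_1 (k : ℕ) (hke : Even k) (hk : 4 ≤ k) :
    sInf {x : ℝ | ∃ r : ℝ, 1 < r ∧ r ^ (k - 1) * (r - 1) - r > 0 ∧
        x = r ^ k * (r - 1) / (r ^ (k - 1) * (r - 1) - r)} ≥
      sInf {x : ℝ | ∃ r : ℝ, 1 < r ∧ r ^ (k - 1) - r > 0 ∧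
        x = r ^ k / (r ^ (k - 1) - r)} := by
  set B := {x : ℝ | ∃ r : ℝ, 1 < r ∧ r ^ (k - 1) - r > 0 ∧
      x = r ^ k / (r ^ (k - 1) - r)} with hB
  -- denominator positivity for B
  have hden : ∀ s : ℝ, 1 < s → 0 < s ^ (k - 1) - s := by
    intro s hs
    have h1 : s ^ 1 < s ^ (k - 1) := pow_lt_pow_right₀ hs (by omega)
    simpa using sub_pos.mpr h1
  have hmem : ∀ s : ℝ, 1 < s → s ^ k / (s ^ (k - 1) - s) ∈ B :=
    fun s hs => ⟨s, hs, hden s hs, rfl⟩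
  have hBbdd : BddBelow B := by
    refine ⟨0, fun x hx => ?_⟩
    obtain ⟨r, hr, hd, rfl⟩ := hx
    have hr0 : (0:ℝ) < r := by linarith
    exact div_nonneg (by positivity) (le_of_lt hd)
  have hpowk : ∀ s : ℝ, s ^ k = s ^ (k - 1) * s := by
    intro s
    rw [← pow_succ]
    congr 1
    omega
  apply le_csInf
  · refine ⟨(2:ℝ) ^ k * (2 - 1) / ((2:ℝ) ^ (k-1) * (2-1) - 2), 2, one_lt_two, ?_, rfl⟩
    have := hden 2 one_lt_two
    nlinarith
  · rintro x ⟨r, hr, hd2, rfl⟩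
    have hr0 : (0:ℝ) < r := by linarith
    have hpk : (0:ℝ) < r ^ (k-1) := pow_pos hr0 _
    rcases le_or_gt r 2 with hr2 | hr2
    · -- same r works
      refine le_trans (csInf_le hBbdd (hmem r hr)) ?_
      rw [div_le_div_iff₀ (hden r hr) hd2]
      have hkk := hpowk r
      nlinarith [mul_nonneg (mul_pos hpk (mul_pos hr0 hr0)).le (by linarith : (0:ℝ) ≤ 2 - r), mul_pos hpk hr0]
    · -- r > 2
      rcases eq_or_ne k 4 with rfl | hk4
      · -- k = 4, use s = 7/4
        refine le_trans (csInf_le hBbdd (hmem (7/4) (by norm_num))) ?_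
        have h1 : (7/4:ℝ) ^ 4 / ((7/4:ℝ) ^ (4-1) - 7/4) = 343/132 := by norm_num
        rw [h1, div_le_div_iff₀ (by norm_num) hd2]
        norm_num at hd2 ⊢
        nlinarith [sq_nonneg (r - 2), sq_nonneg (r*(r-2)), sq_nonneg (r*r - 2*r), sq_nonneg r, mul_pos hr0 hr0]
      · -- k ≥ 6, use s = 3/2
        have hk6 : 6 ≤ k := by
          obtain ⟨m, rfl⟩ := hke
          omega
        refine le_trans (csInf_le hBbdd (hmem (3/2) (by norm_num))) ?_
        have ha : (243/32 : ℝ) ≤ (3/2:ℝ) ^ (k-1) := by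
          calc (243/32:ℝ) = (3/2)^5 := by norm_num
          _ ≤ (3/2)^(k-1) := pow_le_pow_right₀ (by norm_num) (by omega)
        have hy2 : (3/2:ℝ) ^ k / ((3/2:ℝ) ^ (k-1) - 3/2) ≤ 2 := by
          rw [div_le_iff₀ (by linarith)]
          have := hpowk (3/2:ℝ)
          nlinarith
        have hx : (2:ℝ) ≤ r ^ k * (r - 1) / (r ^ (k-1) * (r - 1) - r) := by
          rw [le_div_iff₀ hd2]
          have := hpowk r
          nlinarith [sq_nonneg r]
        linarith
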